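/- Let H be a real Hilbert space, let μ > 0, and let {(y_i, u_i)}_{i ∈ J} be a family of pairs in H × H. Then the following are equivalent: (i) there exists a subset A ⊆ H × H that is maximally monotone and μ-strongly monotone, with (y_i, u_i) ∈ A for every i ∈ J; (ii) for all i, j ∈ J, ⟨u_i − u_j, y_i − y_j⟩ ≥ μ‖y_i − y_j‖². -/

import Mathlib

open scoped RealInnerProductSpace

variable {H : Type*} [NormedAddCommGroup H] [InnerProductSpace ℝ H]

/-- Key algebraic equivalence between strong monotonicity inequality and
nonexpansiveness of the transformed points. -/
lemma key_iff' (μ : ℝ) (hμ : 0 < μ) (x u w v : H) :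
    μ * ‖x - w‖ ^ 2 ≤ ⟪u - v, x - w⟫ ↔
      ‖((2 * (1 + μ)) • x - (x + u)) - ((2 * (1 + μ)) • w - (w + v))‖ ≤
        ‖(x + u) - (w + v)‖ := by
  rw [← pow_le_pow_iff_left₀ (norm_nonneg _) (norm_nonneg _) (two_ne_zero)]
  have e1 : ((2 * (1 + μ)) • x - (x + u)) - ((2 * (1 + μ)) • w - (w + v))
      = (1 + 2 * μ) • (x - w) - (u - v) := by
    rw [smul_sub]; module
  have e2 : (x + u) - (w + v) = (x - w) + (u - v) := by abel
  rw [e1, e2, ← real_inner_self_eq_norm_sq, ← real_inner_self_eq_norm_sq,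
    ← real_inner_self_eq_norm_sq]
  simp only [inner_sub_sub_self, inner_add_add_self, real_inner_smul_left,
    real_inner_smul_right, real_inner_comm (x - w) (u - v)]
  constructor <;> intro h <;> nlinarith [h]

lemma ball_inter_of_fip' [CompleteSpace H] {ι : Type*} (c : ι → H) (r : ι → ℝ)
    (h : ∀ F : Finset ι, ∃ x : H, ∀ i ∈ F, ‖x - c i‖ ≤ r i) :
    ∃ x : H, ∀ i, ‖x - c i‖ ≤ r i := by
  classical
  rcases isEmpty_or_nonempty ι with hι | ⟨⟨i₀⟩⟩
  · exact ⟨0, fun i => (IsEmpty.false i).elim⟩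
  set K : Finset ι → Set H := fun F => {x | ∀ i ∈ F, ‖x - c i‖ ≤ r i} with hK
  have hKne : ∀ F, (K F).Nonempty := fun F => h F
  have hKmono : ∀ {F G : Finset ι}, F ⊆ G → K G ⊆ K F :=
    fun hFG x hx i hi => hx i (hFG hi)
  have hKconv : ∀ F, Convex ℝ (K F) := by
    intro F
    have : K F = ⋂ i ∈ F, Metric.closedBall (c i) (r i) := by
      ext x; simp [hK, Metric.mem_closedBall, dist_eq_norm]
    rw [this]
    exact convex_iInter fun i => convex_iInter fun _ => convex_closedBall _ _
  set g : Finset ι → ℝ := fun F => sInf ((fun x : H => ‖x‖) '' K F) with hg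
  have hSne : ∀ F, ((fun x : H => ‖x‖) '' K F).Nonempty := fun F => (hKne F).image _
  have hSbdd : ∀ F, BddBelow ((fun x : H => ‖x‖) '' K F) := by
    intro F; exact ⟨0, fun t ⟨x, _, hx⟩ => hx ▸ norm_nonneg x⟩
  have hg0 : ∀ F, 0 ≤ g F := fun F => le_csInf (hSne F) (fun t ⟨x, _, hx⟩ => hx ▸ norm_nonneg x)
  have hgmono : ∀ {F G : Finset ι}, F ⊆ G → g F ≤ g G := by
    intro F G hFG
    exact csInf_le_csInf (hSbdd F) (hSne G) (Set.image_mono (hKmono hFG))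
  have hgle : ∀ x : H, ∀ F, x ∈ K F → g F ≤ ‖x‖ := by
    intro x F hx
    exact csInf_le (hSbdd F) ⟨x, hx, rfl⟩
  set B : ℝ := r i₀ + ‖c i₀‖ with hB
  have hgB : ∀ F, g F ≤ B := by
    intro F
    obtain ⟨x, hx⟩ := hKne (insert i₀ F)
    refine le_trans (hgle x F (hKmono (Finset.subset_insert i₀ F) hx)) ?_
    have h0 : ‖x‖ ≤ ‖x - c i₀‖ + ‖c i₀‖ := by
      calc ‖x‖ = ‖(x - c i₀) + c i₀‖ := by rw [sub_add_cancel]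
      _ ≤ ‖x - c i₀‖ + ‖c i₀‖ := norm_add_le _ _
    have := hx i₀ (Finset.mem_insert_self _ _); rw [hB]; linarith
  have hrangebdd : BddAbove (Set.range g) := ⟨B, fun t ⟨F, hF⟩ => hF ▸ hgB F⟩
  set m : ℝ := sSup (Set.range g) with hm
  have hm0 : 0 ≤ m := le_trans (hg0 ∅) (le_csSup hrangebdd ⟨∅, rfl⟩)
  have hgm : ∀ F, g F ≤ m := fun F => le_csSup hrangebdd ⟨F, rfl⟩
  -- choose F' n with g (F' n) > m - 1/(n+1)
  have hex : ∀ n : ℕ, ∃ F : Finset ι, m - 1/(n+1) < g F := by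
    intro n
    have : m - 1/(n+1) < m := by
      have : (0:ℝ) < 1/(n+1) := by positivity
      linarith
    obtain ⟨t, ⟨F, hF⟩, ht⟩ :=
      exists_lt_of_lt_csSup (s := Set.range g) ⟨g ∅, Set.mem_range_self _⟩ this
    exact ⟨F, hF ▸ ht⟩
  choose F' hF' using hex
  set G : ℕ → Finset ι := fun n => (Finset.range (n+1)).sup F' with hG
  have hGmono : ∀ {n p : ℕ}, n ≤ p → G n ⊆ G p := by
    intro n p hnp
    show G n ≤ G p
    exact Finset.sup_mono (Finset.range_subset_range.2 (Nat.succ_le_succ hnp))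
  have hsub : ∀ n, F' n ⊆ G n := fun n =>
    Finset.le_sup (Finset.self_mem_range_succ n)
  have hgG : ∀ n, m - 1/(n+1) < g (G n) := fun n => lt_of_lt_of_le (hF' n) (hgmono (hsub n))
  -- choose x n in K (G n) with small norm
  have hex2 : ∀ n : ℕ, ∀ F : Finset ι, ∃ x ∈ K F, ‖x‖ < g F + 1/(n+1) := by
    intro n F
    have hpos : (0:ℝ) < 1/(n+1) := by positivity
    obtain ⟨t, ⟨x, hxK, hxt⟩, ht⟩ := Real.lt_sInf_add_pos (hSne F) hpos
    refine ⟨x, hxK, ?_⟩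
    have hxt' : ‖x‖ = t := hxt
    rw [hg, hxt']
    exact ht
  choose xx hxxK hxxn using fun n => hex2 n (G n)
  -- key estimate
  have key : ∀ n : ℕ, ∀ x y : H, x ∈ K (G n) → y ∈ K (G n) →
      ‖x‖ ≤ m + 1/(n+1) → ‖y‖ ≤ m + 1/(n+1) → ‖x - y‖^2 ≤ 16 * (1/(n+1)) * (m+1) := by
    intro n x y hx hy hxn hyn
    set ε : ℝ := 1/(n+1) with hε
    have hεpos : (0:ℝ) < ε := by positivity
    have hεle : ε ≤ 1 := by
      rw [hε]; rw [div_le_one (by positivity)]; push_cast; linarith [Nat.cast_nonneg (α := ℝ) n]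
    have hmid : (1/2 : ℝ) • x + (1/2 : ℝ) • y ∈ K (G n) :=
      hKconv (G n) hx hy (by norm_num) (by norm_num) (by norm_num)
    have h1 : m - ε ≤ ‖(1/2 : ℝ) • x + (1/2 : ℝ) • y‖ :=
      le_trans (le_of_lt (hgG n)) (hgle _ _ hmid)
    have h2 : ‖(1/2 : ℝ) • x + (1/2 : ℝ) • y‖ = ‖x + y‖ / 2 := by
      rw [← smul_add, norm_smul]; simp [abs_of_nonneg]; ring
    have hpar : ‖x - y‖^2 + ‖x + y‖^2 = 2 * ‖x‖^2 + 2 * ‖y‖^2 := by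
      rw [← real_inner_self_eq_norm_sq, ← real_inner_self_eq_norm_sq,
        ← real_inner_self_eq_norm_sq, ← real_inner_self_eq_norm_sq]
      simp only [inner_sub_sub_self, inner_add_add_self]
      ring
    have hq : 0 ≤ ‖x + y‖ := norm_nonneg _
    have hq2 : 2 * (m - ε) ≤ ‖x + y‖ := by rw [h2] at h1; linarith
    rcases le_or_gt ε m with hc | hc
    · nlinarith [norm_nonneg x, norm_nonneg y]
    · nlinarith [norm_nonneg x, norm_nonneg y, sq_nonneg (‖x‖ - ‖y‖)]
  have hxxm : ∀ n, ‖xx n‖ ≤ m + 1/(n+1) := by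
    intro n; have := hxxn n; have := hgm (G n); linarith
  -- Cauchy
  have hdistbound : ∀ n p : ℕ, n ≤ p → ‖xx p - xx n‖^2 ≤ 16 * (1/(n+1)) * (m+1) := by
    intro n p hnp
    have hxp : xx p ∈ K (G n) := hKmono (hGmono hnp) (hxxK p)
    have : ‖xx p‖ ≤ m + 1/(n+1) := by
      have h1 := hxxm p
      have hc : (n:ℝ) ≤ p := Nat.cast_le.2 hnp
      have h2 : (1:ℝ)/(p+1) ≤ 1/(n+1) :=
        one_div_le_one_div_of_le (by positivity) (by linarith)
      linarith
    exact key n _ _ hxp (hxxK n) this (hxxm n)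
  -- Cauchy sequence
  have hcauchy : CauchySeq xx := by
    rw [Metric.cauchySeq_iff']
    intro ε hε
    obtain ⟨N, hN⟩ := exists_nat_gt (16 * (m+1) / ε^2)
    refine ⟨N, fun p hp => ?_⟩
    have hb := hdistbound N p hp
    have hNpos : (0:ℝ) < (N:ℝ) + 1 := by positivity
    have h1 : 16 * (m+1) < ε^2 * N := by
      rw [div_lt_iff₀ (by positivity)] at hN; linarith
    have hd2 : dist (xx p) (xx N) ^ 2 < ε ^ 2 := by
      rw [dist_eq_norm]
      have h2 : 16 * (1/((N:ℝ)+1)) * (m+1) < ε^2 := by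
        rw [show 16 * (1/((N:ℝ)+1)) * (m+1) = 16*(m+1) / ((N:ℝ)+1) by ring,
          div_lt_iff₀ hNpos]
        nlinarith [sq_nonneg ε]
      linarith
    exact lt_of_pow_lt_pow_left₀ 2 hε.le hd2
  obtain ⟨x', hx'⟩ := cauchySeq_tendsto_of_complete hcauchy
  refine ⟨x', fun i => ?_⟩
  -- for each i, construct approximating sequence in ball i
  have hyy : ∀ n : ℕ, ∃ yn : H, yn ∈ K (insert i (G n)) ∧ ‖yn‖ ≤ m + 1/(n+1) := by
    intro n
    obtain ⟨yn, hynK, hynn⟩ := hex2 n (insert i (G n))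
    exact ⟨yn, hynK, le_trans (le_of_lt hynn) (by linarith [hgm (insert i (G n))])⟩
  choose yy hyyK hyym using hyy
  have hyyG : ∀ n, yy n ∈ K (G n) := fun n => hKmono (Finset.subset_insert i (G n)) (hyyK n)
  have hdyx : ∀ n : ℕ, ‖yy n - xx n‖^2 ≤ 16 * (1/(n+1)) * (m+1) :=
    fun n => key n _ _ (hyyG n) (hxxK n) (hyym n) (hxxm n)
  have hyytend : Filter.Tendsto yy Filter.atTop (nhds x') := by
    have hdist : Filter.Tendsto (fun n : ℕ => dist (yy n) x') Filter.atTop (nhds 0) := by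
      have hbound : ∀ n : ℕ, dist (yy n) x' ≤ Real.sqrt (16 * (1/(n+1)) * (m+1)) + dist (xx n) x' := by
        intro n
        have h1 : dist (yy n) (xx n) ≤ Real.sqrt (16 * (1/(n+1)) * (m+1)) := by
          rw [dist_eq_norm]
          have := hdyx n
          have h2 : ‖yy n - xx n‖ = Real.sqrt (‖yy n - xx n‖^2) := by
            rw [Real.sqrt_sq (norm_nonneg _)]
          rw [h2]
          exact Real.sqrt_le_sqrt this
        calc dist (yy n) x' ≤ dist (yy n) (xx n) + dist (xx n) x' := dist_triangle _ _ _
        _ ≤ _ := by linarith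
      have htend : Filter.Tendsto
          (fun n : ℕ => Real.sqrt (16 * (1/(n+1)) * (m+1)) + dist (xx n) x')
          Filter.atTop (nhds 0) := by
        have t1 : Filter.Tendsto (fun n : ℕ => 16 * (1/((n:ℝ)+1)) * (m+1))
            Filter.atTop (nhds 0) := by
          have := tendsto_one_div_add_atTop_nhds_zero_nat (𝕜 := ℝ)
          have := this.const_mul (16:ℝ)
          have h3 := ((tendsto_one_div_add_atTop_nhds_zero_nat (𝕜 := ℝ)).const_mul (16:ℝ)).mul_const (m+1)
          simpa using h3
        have t2 : Filter.Tendsto (fun n : ℕ => Real.sqrt (16 * (1/((n:ℝ)+1)) * (m+1)))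
            Filter.atTop (nhds 0) := by
          have := (Real.continuous_sqrt.tendsto 0).comp t1
          simpa [Function.comp_def] using this
        have t3 : Filter.Tendsto (fun n : ℕ => dist (xx n) x') Filter.atTop (nhds 0) :=
          tendsto_iff_dist_tendsto_zero.1 hx'
        simpa using t2.add t3
      have hd0 : ∀ n : ℕ, (0:ℝ) ≤ dist (yy n) x' := fun n => dist_nonneg
      exact squeeze_zero hd0 hbound htend
    exact tendsto_iff_dist_tendsto_zero.2 hdist
  have hball : ∀ n, yy n ∈ Metric.closedBall (c i) (r i) := by
    intro n
    rw [Metric.mem_closedBall, dist_eq_norm]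
    exact hyyK n i (Finset.mem_insert_self _ _)
  have hmem := Metric.isClosed_closedBall.mem_of_tendsto hyytend (Filter.Eventually.of_forall hball)
  rw [Metric.mem_closedBall, dist_eq_norm] at hmem
  exact hmem

lemma finite_kirszbraun' {ι : Type*} (F : Finset ι) (a b : ι → H) (z : H)
    (hab : ∀ i ∈ F, ∀ j ∈ F, ‖b i - b j‖ ≤ ‖a i - a j‖) :
    ∃ x : H, ∀ i ∈ F, ‖x - b i‖ ≤ ‖z - a i‖ := by
  classical
  rcases F.eq_empty_or_nonempty with rfl | hF
  · exact ⟨0, by simp⟩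
  set C : Set H := convexHull ℝ (↑(F.image b)) with hC
  have hCcompact : IsCompact C := (F.image b).finite_toSet.isCompact_convexHull ℝ
  have hCne : C.Nonempty := by
    obtain ⟨i, hi⟩ := hF
    exact ⟨b i, subset_convexHull ℝ _ (by simp; exact ⟨i, hi, rfl⟩)⟩
  set φ : ι → H → ℝ := fun i x => ‖x - b i‖^2 - ‖z - a i‖^2 with hφ
  have hφc : ∀ i, Continuous (φ i) :=
    fun i => (((continuous_id.sub continuous_const).norm.pow 2).sub continuous_const)
  set f : H → ℝ := fun x => F.sup' hF (fun i => φ i x) with hf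
  have hfc : Continuous f := by
    rw [continuous_iff_continuousAt]
    intro x
    exact ContinuousAt.finset_sup'_apply hF (fun i _ => (hφc i).continuousAt)
  obtain ⟨x₀, hx₀C, hx₀min⟩ := hCcompact.exists_isMinOn hCne hfc.continuousOn
  by_cases hd : f x₀ ≤ 0
  · refine ⟨x₀, fun i hi => ?_⟩
    have h1 : φ i x₀ ≤ f x₀ := Finset.le_sup' (fun i => φ i x₀) hi
    have hsq : ‖x₀ - b i‖^2 ≤ ‖z - a i‖^2 := by
      have : ‖x₀ - b i‖^2 - ‖z - a i‖^2 ≤ 0 := le_trans h1 hd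
      linarith
    exact (pow_le_pow_iff_left₀ (norm_nonneg _) (norm_nonneg _) two_ne_zero).1 hsq
  push_neg at hd
  exfalso
  set d : ℝ := f x₀ with hdd
  set T : Finset ι := F.filter (fun i => φ i x₀ = d) with hT
  obtain ⟨i₁, hi₁F, hi₁⟩ := F.exists_mem_eq_sup' hF (fun i => φ i x₀)
  have hTne : T.Nonempty := ⟨i₁, Finset.mem_filter.2 ⟨hi₁F, hi₁.symm⟩⟩
  have hTF : T ⊆ F := Finset.filter_subset _ _
  set D : Set H := convexHull ℝ (↑(T.image b)) with hD
  have hDcompact : IsCompact D := (T.image b).finite_toSet.isCompact_convexHull ℝ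
  have hDconv : Convex ℝ D := convex_convexHull ℝ _
  have hDne : D.Nonempty := by
    obtain ⟨i, hi⟩ := hTne
    exact ⟨b i, subset_convexHull ℝ _ (by simp; exact ⟨i, hi, rfl⟩)⟩
  have hDsubC : D ⊆ C :=
    convexHull_mono (by exact_mod_cast Finset.image_subset_image hTF)
  obtain ⟨yp, hyD, hyeq⟩ :=
    exists_norm_eq_iInf_of_complete_convex hDne hDcompact.isComplete hDconv x₀
  have hproj : ∀ w ∈ D, ⟪x₀ - yp, w - yp⟫ ≤ 0 :=
    (norm_eq_iInf_iff_real_inner_le_zero hDconv hyD).1 hyeq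
  by_cases hxy : x₀ = yp
  · -- x₀ ∈ D : convex hull computation
    have hx₀D : x₀ ∈ D := hxy ▸ hyD
    rw [hD, Finset.convexHull_eq, Set.mem_setOf_eq] at hx₀D
    obtain ⟨w, hw0, hw1, hcm⟩ := hx₀D
    set s : Finset H := T.image b with hs
    have hsum : ∑ c ∈ s, w c • c = x₀ := by
      have h := Finset.centerMass_eq_of_sum_1 s id hw1
      rw [h] at hcm
      simpa using hcm
    have hsum0 : ∑ c ∈ s, w c • (c - x₀) = 0 := by
      simp only [smul_sub, Finset.sum_sub_distrib, hsum, ← Finset.sum_smul, hw1, one_smul,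
        sub_self]
    -- choose indices
    have hchoice : ∀ c ∈ s, ∃ j, j ∈ T ∧ b j = c := by
      intro c hc; exact Finset.mem_image.1 hc
    choose k hk1 hk2 using hchoice
    set αf : H → H := fun c => if hc : c ∈ s then a (k c hc) else 0 with hαf
    -- key pairwise inequality
    have hpair : ∀ c ∈ s, ∀ c' ∈ s,
        d + ⟪z - αf c, z - αf c'⟫ ≤ ⟪c - x₀, c' - x₀⟫ := by
      intro c hc c' hc'
      set i := k c hc
      set j := k c' hc'
      have hiT : i ∈ T := hk1 c hc
      have hjT : j ∈ T := hk1 c' hc'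
      have hbi : b i = c := hk2 c hc
      have hbj : b j = c' := hk2 c' hc'
      have hαc : αf c = a i := by rw [hαf]; simp [hc]; rfl
      have hαc' : αf c' = a j := by rw [hαf]; simp [hc']; rfl
      have hact_i : ‖x₀ - b i‖^2 - ‖z - a i‖^2 = d := (Finset.mem_filter.1 hiT).2
      have hact_j : ‖x₀ - b j‖^2 - ‖z - a j‖^2 = d := (Finset.mem_filter.1 hjT).2
      have hbb : ‖b i - b j‖ ≤ ‖a i - a j‖ := hab i (hTF hiT) j (hTF hjT)
      have hbb2 : ‖b i - b j‖^2 ≤ ‖a i - a j‖^2 :=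
        (pow_le_pow_iff_left₀ (norm_nonneg _) (norm_nonneg _) two_ne_zero).2 hbb
      have e1 : ‖b i - b j‖^2 = ‖x₀ - b i‖^2 - 2 * ⟪x₀ - b i, x₀ - b j⟫ + ‖x₀ - b j‖^2 := by
        rw [show b i - b j = (x₀ - b j) - (x₀ - b i) by abel, ← real_inner_self_eq_norm_sq,
          ← real_inner_self_eq_norm_sq, ← real_inner_self_eq_norm_sq, inner_sub_sub_self]
        rw [real_inner_comm (x₀ - b j) (x₀ - b i)]; ring
      have e2 : ‖a i - a j‖^2 = ‖z - a i‖^2 - 2 * ⟪z - a i, z - a j⟫ + ‖z - a j‖^2 := by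
        rw [show a i - a j = (z - a j) - (z - a i) by abel, ← real_inner_self_eq_norm_sq,
          ← real_inner_self_eq_norm_sq, ← real_inner_self_eq_norm_sq, inner_sub_sub_self]
        rw [real_inner_comm (z - a j) (z - a i)]; ring
      have e3 : ⟪c - x₀, c' - x₀⟫ = ⟪x₀ - b i, x₀ - b j⟫ := by
        rw [← hbi, ← hbj, show b i - x₀ = -(x₀ - b i) by abel,
          show b j - x₀ = -(x₀ - b j) by abel, inner_neg_neg]
      rw [e3, hαc, hαc']
      rw [e1, e2] at hbb2
      linarith
    -- double sum computation
    have hzero : (0:ℝ) = ∑ c ∈ s, w c * (∑ c' ∈ s, w c' * ⟪c - x₀, c' - x₀⟫) := by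
      have h0 : (0:ℝ) = ⟪∑ c ∈ s, w c • (c - x₀), ∑ c' ∈ s, w c' • (c' - x₀)⟫ := by
        rw [hsum0, inner_zero_left]
      rw [sum_inner] at h0
      simp_rw [real_inner_smul_left, inner_sum, real_inner_smul_right] at h0
      exact h0
    set v : H := ∑ c ∈ s, w c • (z - αf c) with hv
    have hvv : ⟪v, v⟫ = ∑ c ∈ s, w c * (∑ c' ∈ s, w c' * ⟪z - αf c, z - αf c'⟫) := by
      rw [hv, sum_inner]
      simp_rw [real_inner_smul_left, inner_sum, real_inner_smul_right]
    have hstep : ∑ c ∈ s, w c * (∑ c' ∈ s, w c' * (d + ⟪z - αf c, z - αf c'⟫)) ≤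
        ∑ c ∈ s, w c * (∑ c' ∈ s, w c' * ⟪c - x₀, c' - x₀⟫) := by
      refine Finset.sum_le_sum (fun c hc => ?_)
      refine mul_le_mul_of_nonneg_left ?_ (hw0 c hc)
      refine Finset.sum_le_sum (fun c' hc' => ?_)
      exact mul_le_mul_of_nonneg_left (hpair c hc c' hc') (hw0 c' hc')
    have hlhs : ∑ c ∈ s, w c * (∑ c' ∈ s, w c' * (d + ⟪z - αf c, z - αf c'⟫)) =
        d + ⟪v, v⟫ := by
      have expand : ∀ c ∈ s, w c * (∑ c' ∈ s, w c' * (d + ⟪z - αf c, z - αf c'⟫)) =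
          w c * d + w c * (∑ c' ∈ s, w c' * ⟪z - αf c, z - αf c'⟫) := by
        intro c hc
        have h2 : (∑ c' ∈ s, w c' * (d + ⟪z - αf c, z - αf c'⟫)) =
            (∑ c' ∈ s, w c' * d) + ∑ c' ∈ s, w c' * ⟪z - αf c, z - αf c'⟫ := by
          rw [← Finset.sum_add_distrib]
          exact Finset.sum_congr rfl (fun c' _ => by ring)
        rw [h2, ← Finset.sum_mul, hw1, one_mul, mul_add]
      rw [Finset.sum_congr rfl expand, Finset.sum_add_distrib, ← Finset.sum_mul, hw1,
        one_mul, hvv]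
    have hfinal : d + ⟪v, v⟫ ≤ 0 := by
      rw [← hlhs]
      calc ∑ c ∈ s, w c * (∑ c' ∈ s, w c' * (d + ⟪z - αf c, z - αf c'⟫))
          ≤ ∑ c ∈ s, w c * (∑ c' ∈ s, w c' * ⟪c - x₀, c' - x₀⟫) := hstep
      _ = 0 := hzero.symm
    have hv0 : (0:ℝ) ≤ ⟪v, v⟫ := real_inner_self_nonneg
    linarith
  · -- perturbation case
    set u : H := yp - x₀ with hu
    have hune : u ≠ 0 := fun h => hxy (by rw [hu] at h; have := sub_eq_zero.1 h; exact this.symm)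
    have hupos : (0:ℝ) < ‖u‖ := norm_pos_iff.2 hune
    have hui : ∀ i ∈ T, ‖u‖^2 ≤ ⟪u, b i - x₀⟫ := by
      intro i hi
      have hbD : b i ∈ D := subset_convexHull ℝ _ (by simp; exact ⟨i, hi, rfl⟩)
      have := hproj (b i) hbD
      have hexp : ⟪x₀ - yp, b i - yp⟫ = -⟪u, b i - x₀⟫ + ‖u‖^2 := by
        rw [hu, show x₀ - yp = -(yp - x₀) by abel, inner_neg_left,
          show b i - yp = (b i - x₀) - (yp - x₀) by abel, inner_sub_right,
          real_inner_self_eq_norm_sq]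
        ring
      rw [hexp] at this
      linarith
    -- inactive terms bounded away
    have hinact : ∀ i ∈ F, i ∉ T → φ i x₀ < d := by
      intro i hiF hiT
      have hle : φ i x₀ ≤ d := Finset.le_sup' (fun i => φ i x₀) hiF
      rcases lt_or_eq_of_le hle with h | h
      · exact h
      · exact absurd (Finset.mem_filter.2 ⟨hiF, h⟩) hiT
    -- find δ > 0 such that inactive terms stay below d in ball
    have hδ : ∃ δ : ℝ, 0 < δ ∧ ∀ x : H, ‖x - x₀‖ < δ → ∀ i ∈ F, i ∉ T → φ i x < d := by
      have hcont : ∀ i ∈ F, i ∉ T → ∃ δ : ℝ, 0 < δ ∧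
          ∀ x : H, ‖x - x₀‖ < δ → φ i x < d := by
        intro i hiF hiT
        have hico : Continuous (φ i) := hφc i
        have h1 : φ i x₀ < d := hinact i hiF hiT
        have h2 : (φ i) ⁻¹' Set.Iio d ∈ nhds x₀ :=
          (hico.continuousAt (x := x₀)).preimage_mem_nhds (Iio_mem_nhds h1)
        obtain ⟨δ, hδpos, hδball⟩ := Metric.mem_nhds_iff.1 h2
        exact ⟨δ, hδpos, fun x hx => hδball (by rwa [Metric.mem_ball, dist_eq_norm])⟩
      set S : Finset ι := F.filter (fun i => i ∉ T) with hS
      rcases S.eq_empty_or_nonempty with hSe | hSne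
      · refine ⟨1, one_pos, fun x hx i hiF hiT => ?_⟩
        have hiS : i ∈ S := Finset.mem_filter.2 ⟨hiF, hiT⟩
        rw [hSe] at hiS
        exact absurd hiS (Finset.notMem_empty i)
      · choose δf hδf1 hδf2 using fun (i : ι) (h : i ∈ S) =>
          hcont i (Finset.mem_filter.1 h).1 (Finset.mem_filter.1 h).2
        obtain ⟨i₂, hi₂S, hi₂min⟩ := S.exists_min_image (fun i => if h : i ∈ S then δf i h else 1) hSne
        refine ⟨δf i₂ hi₂S, hδf1 i₂ hi₂S, fun x hx i hiF hiT => ?_⟩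
        have hiS : i ∈ S := Finset.mem_filter.2 ⟨hiF, hiT⟩
        have := hi₂min i hiS
        rw [dif_pos hi₂S, dif_pos hiS] at this
        exact hδf2 i hiS x (lt_of_lt_of_le hx this)
    obtain ⟨δ, hδpos, hδprop⟩ := hδ
    set t : ℝ := min 1 (δ / (2 * ‖u‖)) with ht
    have htpos : 0 < t := lt_min one_pos (by positivity)
    have htle1 : t ≤ 1 := min_le_left _ _
    set xt : H := x₀ + t • u with hxt
    have hxtC : xt ∈ C := by
      have : xt = (1 - t) • x₀ + t • yp := by
        rw [hxt, hu]; module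
      rw [this]
      exact (convex_convexHull ℝ _) hx₀C (hDsubC hyD) (by linarith) htpos.le (by ring)
    have hxtball : ‖xt - x₀‖ < δ := by
      rw [hxt, add_sub_cancel_left, norm_smul, Real.norm_eq_abs, abs_of_pos htpos]
      have h1 : t ≤ δ / (2 * ‖u‖) := min_le_right _ _
      calc t * ‖u‖ ≤ (δ / (2 * ‖u‖)) * ‖u‖ := by nlinarith
      _ = δ / 2 := by field_simp
      _ < δ := by linarith
    have hfxtlt : ∀ i ∈ F, φ i xt < d := by
      intro i hiF
      by_cases hiT : i ∈ T
      · -- active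
        have hkey := hui i hiT
        have hexp : ‖xt - b i‖^2 = ‖x₀ - b i‖^2 - 2 * t * ⟪u, b i - x₀⟫ + t^2 * ‖u‖^2 := by
          have he : xt - b i = (x₀ - b i) + t • u := by rw [hxt]; abel
          rw [he, ← real_inner_self_eq_norm_sq, ← real_inner_self_eq_norm_sq,
            ← real_inner_self_eq_norm_sq, inner_add_add_self, real_inner_smul_left,
            real_inner_smul_right, real_inner_smul_left,
            show (⟪x₀ - b i, u⟫:ℝ) = -⟪u, b i - x₀⟫ by
              rw [real_inner_comm, show x₀ - b i = -(b i - x₀) by abel, inner_neg_right],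
            show (⟪u, x₀ - b i⟫:ℝ) = -⟪u, b i - x₀⟫ by
              rw [show x₀ - b i = -(b i - x₀) by abel, inner_neg_right],
            real_inner_smul_right, real_inner_self_eq_norm_sq]
          ring
        have hact : φ i x₀ = d := (Finset.mem_filter.1 hiT).2
        have : φ i xt = φ i x₀ - 2 * t * ⟪u, b i - x₀⟫ + t^2 * ‖u‖^2 := by
          rw [hφ]; simp only []; rw [hexp]; ring
        rw [this, hact]
        have h1 : t * ‖u‖^2 ≤ t * ⟪u, b i - x₀⟫ := mul_le_mul_of_nonneg_left hkey htpos.le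
        have h2 : 0 < t * ‖u‖^2 := mul_pos htpos (pow_pos hupos 2)
        have h3 : 0 ≤ (t * (1 - t)) * ‖u‖^2 :=
          mul_nonneg (mul_nonneg htpos.le (by linarith)) (pow_nonneg (norm_nonneg u) 2)
        nlinarith [h1, h2, h3]
      · exact hδprop xt hxtball i hiF hiT
    have hlt : f xt < d := (Finset.sup'_lt_iff hF).2 (fun i hi => hfxtlt i hi)
    have hge : f x₀ ≤ f xt := hx₀min hxtC
    rw [← hdd] at hge
    linarith

/-- A subset of `H × H` (the graph of a set-valued operator) is monotone. -/
def IsMonotoneGraph (A : Set (H × H)) : Prop :=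
  ∀ p ∈ A, ∀ q ∈ A, 0 ≤ ⟪p.2 - q.2, p.1 - q.1⟫

/-- A subset of `H × H` is `μ`-strongly monotone. -/
def IsStronglyMonotoneGraph (μ : ℝ) (A : Set (H × H)) : Prop :=
  ∀ p ∈ A, ∀ q ∈ A, μ * ‖p.1 - q.1‖ ^ 2 ≤ ⟪p.2 - q.2, p.1 - q.1⟫

/-- A subset of `H × H` is maximally monotone: it is monotone and not a proper
subset of any monotone subset of `H × H`. -/
def IsMaximallyMonotoneGraph (A : Set (H × H)) : Prop :=
  IsMonotoneGraph A ∧ ∀ B : Set (H × H), IsMonotoneGraph B → A ⊆ B → B = A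

/-- Interpolation theorem for `μ`-strongly and maximally monotone operators. -/
theorem strongly_monotone_interpolation
    [CompleteSpace H] (μ : ℝ) (hμ : 0 < μ) {J : Type*} (y u : J → H) :
    (∃ A : Set (H × H), IsMaximallyMonotoneGraph A ∧ IsStronglyMonotoneGraph μ A ∧
        ∀ i, (y i, u i) ∈ A) ↔
    (∀ i j, μ * ‖y i - y j‖ ^ 2 ≤ ⟪u i - u j, y i - y j⟫) := by
  constructor
  · rintro ⟨A, hAmax, hAstr, hAmem⟩ i j
    exact hAstr _ (hAmem i) _ (hAmem j)
  intro hij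
  classical
  set A₀ : Set (H × H) := Set.range (fun i => (y i, u i)) with hA₀
  have hA₀str : IsStronglyMonotoneGraph μ A₀ := by
    rintro p ⟨i, rfl⟩ q ⟨j, rfl⟩
    exact hij i j
  set 𝒮 : Set (Set (H × H)) := {C | A₀ ⊆ C ∧ IsStronglyMonotoneGraph μ C} with h𝒮
  have hchain : ∀ c ⊆ 𝒮, IsChain (· ⊆ ·) c → c.Nonempty →
      ∃ ub ∈ 𝒮, ∀ s ∈ c, s ⊆ ub := by
    intro c hc hchain ⟨t, ht⟩
    refine ⟨⋃₀ c, ⟨subset_trans (hc ht).1 (Set.subset_sUnion_of_mem ht), ?_⟩,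
      fun s hs => Set.subset_sUnion_of_mem hs⟩
    rintro p ⟨s₁, hs₁, hp⟩ q ⟨s₂, hs₂, hq⟩
    rcases hchain.total hs₁ hs₂ with h | h
    · exact (hc hs₂).2 p (h hp) q hq
    · exact (hc hs₁).2 p hp q (h hq)
  obtain ⟨M, hA₀M, hMmax⟩ :=
    zorn_subset_nonempty 𝒮 hchain A₀ ⟨subset_rfl, hA₀str⟩
  have hMstr : IsStronglyMonotoneGraph μ M := hMmax.1.2
  have h2μpos : (0:ℝ) < 2 * (1 + μ) := by linarith
  -- surjectivity of Id + M
  have hsurj : ∀ z : H, ∃ p ∈ M, p.1 + p.2 = z := by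
    intro z
    set aM : M → H := fun p => p.1.1 + p.1.2 with haM
    set bM : M → H := fun p => (2 * (1 + μ)) • p.1.1 - (p.1.1 + p.1.2) with hbM
    have hpair : ∀ p q : M, ‖bM p - bM q‖ ≤ ‖aM p - aM q‖ := by
      intro p q
      exact (key_iff' μ hμ p.1.1 p.1.2 q.1.1 q.1.2).1 (hMstr p.1 p.2 q.1 q.2)
    obtain ⟨n, hn⟩ := ball_inter_of_fip' bM (fun p => ‖z - aM p‖)
      (fun Fs => finite_kirszbraun' Fs aM bM z (fun p _ q _ => hpair p q))
    set x : H := (2 * (1 + μ))⁻¹ • (z + n) with hx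
    have hxn : (2 * (1 + μ)) • x - z = n := by
      rw [hx, smul_smul, mul_inv_cancel₀ (ne_of_gt h2μpos), one_smul]
      abel
    have hnew : ∀ p ∈ M, μ * ‖x - p.1‖ ^ 2 ≤ ⟪(z - x) - p.2, x - p.1⟫ := by
      intro p hp
      refine (key_iff' μ hμ x (z - x) p.1 p.2).2 ?_
      have hzx : x + (z - x) = z := by abel
      rw [hzx, hxn]
      exact hn ⟨p, hp⟩
    have hins : insert (x, z - x) M ∈ 𝒮 := by
      refine ⟨subset_trans hA₀M (Set.subset_insert _ _), ?_⟩
      rintro p (rfl | hp) q (rfl | hq)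
      · simp
      · exact hnew q hq
      · have h1 := hnew p hp
        have e1 : ‖p.1 - x‖ = ‖x - p.1‖ := norm_sub_rev _ _
        have e2 : (⟪p.2 - (z - x), p.1 - x⟫ : ℝ) = ⟪(z - x) - p.2, x - p.1⟫ := by
          rw [show p.2 - (z - x) = -((z - x) - p.2) by abel,
            show p.1 - x = -(x - p.1) by abel, inner_neg_neg]
        show μ * ‖p.1 - x‖ ^ 2 ≤ ⟪p.2 - (z - x), p.1 - x⟫
        rw [e1, e2]
        exact h1
      · exact hMstr p hp q hq
    have hMeq : insert (x, z - x) M ⊆ M :=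
      hMmax.2 hins (Set.subset_insert _ _)
    exact ⟨(x, z - x), hMeq (Set.mem_insert _ _), by simp⟩
  refine ⟨M, ⟨?_, ?_⟩, hMstr, fun i => hA₀M ⟨i, rfl⟩⟩
  · intro p hp q hq
    have h1 := hMstr p hp q hq
    have h2 : 0 ≤ μ * ‖p.1 - q.1‖ ^ 2 := by positivity
    linarith
  · intro B hB hMB
    refine Set.Subset.antisymm ?_ hMB
    intro p hp
    obtain ⟨q, hqM, hq⟩ := hsurj (p.1 + p.2)
    have h0 := hB p hp q (hMB hqM)
    have e1 : q.1 - p.1 = p.2 - q.2 := by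
      rw [sub_eq_sub_iff_add_eq_add, hq]
      abel
    rw [← e1] at h0
    have e2 : (⟪q.1 - p.1, p.1 - q.1⟫ : ℝ) = -‖p.1 - q.1‖ ^ 2 := by
      rw [show q.1 - p.1 = -(p.1 - q.1) by abel, inner_neg_left,
        real_inner_self_eq_norm_sq]
    rw [e2] at h0
    have h3 : ‖p.1 - q.1‖ ^ 2 ≤ 0 := by linarith
    have h4 : p.1 = q.1 := by
      have := sq_nonneg ‖p.1 - q.1‖
      have hnz : ‖p.1 - q.1‖ ^ 2 = 0 := le_antisymm h3 this
      have : ‖p.1 - q.1‖ = 0 := by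
        nlinarith [norm_nonneg (p.1 - q.1)]
      exact sub_eq_zero.1 (norm_eq_zero.1 this)
    have h5 : p.2 = q.2 := by
      have h6 := hq
      rw [h4] at h6
      exact (add_left_cancel h6).symm
    have : p = q := Prod.ext h4 h5
    rw [this]
    exact hqM
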